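/- For integers q ≥ 1, 0 ≤ s ≤ q, and ℓ ≥ 2: C(q,s)^2 / C(ℓq, ℓs) ≤ (s/q)^{(ℓ-2)s}, where C denotes the binomial coefficient (interpreting 0^0 = 1). -/

import Mathlib

open Finset

lemma pow_mul_factorial_le (q s : ℕ) (hs : s ≤ q) :
    q ^ s * s.factorial ≤ s ^ s * q.descFactorial s := by
  have h1 : q ^ s * s.factorial = ∏ i ∈ range s, q * (s - i) := by
    rw [Finset.prod_mul_distrib, Finset.prod_const, Finset.card_range]
    congr 1
    clear hs
    induction s with
    | zero => simp
    | succ n ih =>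
      rw [Finset.prod_range_succ']
      simp only [Nat.succ_sub_succ]
      rw [← ih, Nat.sub_zero, Nat.factorial_succ, mul_comm]
  have h2 : s ^ s * q.descFactorial s = ∏ i ∈ range s, (q - i) * s := by
    rw [Nat.descFactorial_eq_prod_range, Finset.prod_mul_distrib, Finset.prod_const,
      Finset.card_range, mul_comm]
  rw [h1, h2]
  apply Finset.prod_le_prod
  · intro i _; exact Nat.zero_le _
  · intro i hi
    rw [Finset.mem_range] at hi
    have hiq : i ≤ q := le_trans (le_of_lt hi) hs
    rw [Nat.mul_sub, Nat.sub_mul]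
    exact Nat.sub_le_sub_left (by rw [mul_comm q i]; exact Nat.mul_le_mul_left i hs) _

lemma pow_le_choose_mul (q s : ℕ) (hs : s ≤ q) :
    q ^ s ≤ q.choose s * s ^ s := by
  have h := pow_mul_factorial_le q s hs
  rw [Nat.descFactorial_eq_factorial_mul_choose] at h
  have hf : 0 < s.factorial := Nat.factorial_pos s
  have : q ^ s * s.factorial ≤ (q.choose s * s ^ s) * s.factorial := by
    calc q ^ s * s.factorial ≤ s ^ s * (s.factorial * q.choose s) := h
      _ = (q.choose s * s ^ s) * s.factorial := by ring
  exact Nat.le_of_mul_le_mul_right this hf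

lemma choose_mul_choose_le (a b c d : ℕ) :
    a.choose b * c.choose d ≤ (a + c).choose (b + d) := by
  rw [Nat.add_choose_eq]
  have hmem : ((b, d) : ℕ × ℕ) ∈ Finset.HasAntidiagonal.antidiagonal (b + d) :=
    Finset.HasAntidiagonal.mem_antidiagonal.mpr rfl
  exact Finset.single_le_sum (f := fun ij : ℕ × ℕ => a.choose ij.1 * c.choose ij.2)
    (fun i _ => Nat.zero_le _) hmem

lemma choose_pow_le (q s ℓ : ℕ) : q.choose s ^ ℓ ≤ (ℓ * q).choose (ℓ * s) := by
  induction ℓ with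
  | zero => simp
  | succ n ih =>
    calc q.choose s ^ (n + 1) = q.choose s ^ n * q.choose s := pow_succ _ _
      _ ≤ (n * q).choose (n * s) * q.choose s := Nat.mul_le_mul_right _ ih
      _ ≤ (n * q + q).choose (n * s + s) := choose_mul_choose_le _ _ _ _
      _ = ((n + 1) * q).choose ((n + 1) * s) := by ring_nf

theorem choose_sq_ratio_le (q s ℓ : ℕ) (hq : 1 ≤ q) (hs : s ≤ q) (hℓ : 2 ≤ ℓ) :
    ((q.choose s : ℝ)) ^ 2 / ((ℓ * q).choose (ℓ * s) : ℝ)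
      ≤ ((s : ℝ) / (q : ℝ)) ^ ((ℓ - 2) * s) := by
  obtain ⟨m, rfl⟩ : ∃ m, ℓ = m + 2 := ⟨ℓ - 2, by omega⟩
  set c : ℝ := (q.choose s : ℝ) with hc
  have hc1 : (1 : ℝ) ≤ c := by
    rw [hc]; exact_mod_cast Nat.one_le_iff_ne_zero.mpr (Nat.choose_pos hs).ne'
  have hc0 : 0 < c := lt_of_lt_of_le one_pos hc1
  have hC0 : (0 : ℝ) < (((m + 2) * q).choose ((m + 2) * s) : ℝ) := by
    exact_mod_cast Nat.choose_pos (Nat.mul_le_mul_left _ hs)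
  have hpow : c ^ (m + 2) ≤ (((m + 2) * q).choose ((m + 2) * s) : ℝ) := by
    rw [hc]; exact_mod_cast choose_pow_le q s (m + 2)
  have step1 : c ^ 2 / (((m + 2) * q).choose ((m + 2) * s) : ℝ) ≤ c ^ 2 / c ^ (m + 2) :=
    div_le_div_of_nonneg_left (by positivity) (by positivity) hpow
  have step2 : c ^ 2 / c ^ (m + 2) = 1 / c ^ m := by
    rw [pow_add]
    field_simp
  have key : c ^ 2 / (((m + 2) * q).choose ((m + 2) * s) : ℝ) ≤ 1 / c ^ m := by
    rw [← step2]; exact step1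
  refine key.trans ?_
  simp only [Nat.add_sub_cancel]
  rcases Nat.eq_zero_or_pos s with rfl | hs0
  · simp [hc]
  · have hq0 : (0 : ℝ) < q := by exact_mod_cast hq
    have hs0' : (0 : ℝ) < s := by exact_mod_cast hs0
    have hbase : ((q : ℝ) / s) ^ s ≤ c := by
      rw [hc, div_pow, div_le_iff₀ (by positivity)]
      exact_mod_cast pow_le_choose_mul q s hs
    have h2 : ((q : ℝ) / s) ^ (m * s) ≤ c ^ m := by
      rw [mul_comm m s, pow_mul]
      exact pow_le_pow_left₀ (by positivity) hbase m
    have h3 : (1 : ℝ) / c ^ m ≤ 1 / ((q : ℝ) / s) ^ (m * s) :=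
      one_div_le_one_div_of_le (by positivity) h2
    refine h3.trans_eq ?_
    rw [one_div, ← inv_pow, inv_div]
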